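/- Tverberg's theorem: any set P ⊂ ℝ^d of (m−1)(d+1)+1 points admits a partition into m pairwise disjoint subsets T₁, …, T_m whose convex hulls have a common point. -/

import Mathlib

open scoped Classical

open Finset

namespace TverbergAux

variable {N : ℕ}

/-- Euclidean dot product on `Fin N → ℝ`. -/
def dot (x y : Fin N → ℝ) : ℝ := ∑ i, x i * y i

lemma dot_nonneg_self (x : Fin N → ℝ) : 0 ≤ dot x x :=
  Finset.sum_nonneg fun i _ => mul_self_nonneg _

lemma dot_self_eq_zero {x : Fin N → ℝ} (h : dot x x = 0) : x = 0 := by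
  funext i
  have h' := (Finset.sum_eq_zero_iff_of_nonneg (fun j _ => mul_self_nonneg (x j))).1 h i
    (Finset.mem_univ i)
  have := mul_self_eq_zero.1 h'
  simpa using this

lemma dot_self_pos {x : Fin N → ℝ} (h : x ≠ 0) : 0 < dot x x :=
  lt_of_le_of_ne (dot_nonneg_self x) fun h' => h (dot_self_eq_zero h'.symm)

lemma dot_add_left (x y z : Fin N → ℝ) : dot (x + y) z = dot x z + dot y z := by
  simp [dot, add_mul, Finset.sum_add_distrib]

lemma dot_sub_left (x y z : Fin N → ℝ) : dot (x - y) z = dot x z - dot y z := by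
  simp [dot, sub_mul, Finset.sum_sub_distrib]

lemma dot_smul_left (c : ℝ) (x z : Fin N → ℝ) : dot (c • x) z = c * dot x z := by
  simp [dot, Finset.mul_sum, mul_assoc]

lemma dot_comm (x y : Fin N → ℝ) : dot x y = dot y x := by
  simp [dot, mul_comm]

lemma dot_add_right (x y z : Fin N → ℝ) : dot x (y + z) = dot x y + dot x z := by
  rw [dot_comm, dot_add_left, dot_comm y x, dot_comm z x]

lemma dot_smul_right (c : ℝ) (x z : Fin N → ℝ) : dot x (c • z) = c * dot x z := by
  rw [dot_comm, dot_smul_left, dot_comm z x]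

lemma dot_sum_left {ι : Type*} (s : Finset ι) (f : ι → (Fin N → ℝ)) (y : Fin N → ℝ) :
    dot (∑ i ∈ s, f i) y = ∑ i ∈ s, dot (f i) y := by
  classical
  induction s using Finset.induction with
  | empty => simp [dot]
  | insert _ _ h ih => simp [Finset.sum_insert h, dot_add_left, ih]

lemma dot_zero_left (y : Fin N → ℝ) : dot 0 y = 0 := by simp [dot]

/-- If `y, s ∈ K` convex and `dot s y < dot y y`, then some point of `K` has strictly
smaller squared norm than `y`. -/
lemma decrease {K : Set (Fin N → ℝ)} (hK : Convex ℝ K) {y s : Fin N → ℝ}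
    (hy : y ∈ K) (hs : s ∈ K) (h : dot s y < dot y y) :
    ∃ z ∈ K, dot z z < dot y y := by
  set u := s - y with hu
  have huy : dot u y < 0 := by
    rw [hu, dot_sub_left]; linarith
  have hune : u ≠ 0 := by
    intro h0
    rw [h0, dot_zero_left] at huy; linarith
  have hQu : 0 < dot u u := dot_self_pos hune
  set t : ℝ := min 1 (-dot u y / dot u u) with ht
  have ht0 : 0 < t := lt_min one_pos (div_pos (by linarith) hQu)
  have ht1 : t ≤ 1 := min_le_left _ _
  have htb : t ≤ -dot u y / dot u u := min_le_right _ _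
  have htQu : t * dot u u ≤ -dot u y := by
    rw [div_eq_mul_inv] at htb
    calc t * dot u u ≤ (-dot u y / dot u u) * dot u u := by
          exact mul_le_mul_of_nonneg_right (min_le_right _ _) hQu.le
      _ = -dot u y := by field_simp
  refine ⟨(1 - t) • y + t • s, hK hy hs (by linarith) ht0.le (by ring), ?_⟩
  have hz : (1 - t) • y + t • s = y + t • u := by
    rw [hu]; module
  rw [hz]
  have expand : dot (y + t • u) (y + t • u)
      = dot y y + 2 * t * dot u y + t * t * dot u u := by
    simp only [dot_add_left, dot_add_right, dot_smul_left, dot_smul_right, dot_comm y u]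
    ring
  rw [expand]
  nlinarith [mul_pos ht0 hQu, mul_lt_mul_of_pos_left huy ht0]

/-- Extract explicit weights from membership in the convex hull of a finite range. -/
lemma exists_weights {k : ℕ} (x : Fin k → (Fin N → ℝ)) {z : Fin N → ℝ}
    (hz : z ∈ convexHull ℝ (Set.range x)) :
    ∃ lam : Fin k → ℝ, (∀ i, 0 ≤ lam i) ∧ ∑ i, lam i = 1 ∧ ∑ i, lam i • x i = z := by
  rw [convexHull_range_eq_exists_affineCombination] at hz
  obtain ⟨s, w, hw0, hw1, hcomb⟩ := hz
  refine ⟨fun i => if i ∈ s then w i else 0, fun i => ?_, ?_, ?_⟩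
  · dsimp only
    split_ifs with h
    · exact hw0 i h
    · exact le_rfl
  · show ∑ i, (if i ∈ s then w i else 0) = 1
    rw [Finset.sum_ite_mem, Finset.univ_inter, hw1]
  · show ∑ i, (if i ∈ s then w i else 0) • x i = z
    rw [← hcomb, s.affineCombination_eq_linear_combination x w hw1]
    simp_rw [ite_smul, zero_smul]
    rw [Finset.sum_ite_mem, Finset.univ_inter]

/-- The halfspace `{z | c ≤ dot z y}` is convex. -/
lemma convex_halfspace_dot (y : Fin N → ℝ) (c : ℝ) : Convex ℝ {z | c ≤ dot z y} := by
  intro a ha b hb p q hp hq hpq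
  simp only [Set.mem_setOf_eq] at *
  have : dot (p • a + q • b) y = p * dot a y + q * dot b y := by
    rw [dot_add_left, dot_smul_left, dot_smul_left]
  rw [this]
  have hcc : p * c + q * c = c := by rw [← add_mul, hpq, one_mul]
  nlinarith [mul_le_mul_of_nonneg_left ha hp, mul_le_mul_of_nonneg_left hb hq]

/-- The linear functional `dot · y`. -/
def dotL (y : Fin N → ℝ) : (Fin N → ℝ) →ₗ[ℝ] ℝ where
  toFun x := dot x y
  map_add' a b := dot_add_left a b y
  map_smul' c a := by simp [dot_smul_left]

lemma exists_zero_coeff (y : Fin N → ℝ) (hy : y ≠ 0) (x : Fin (N + 1) → Fin N → ℝ)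
    (hxy : ∀ k, dot y y ≤ dot (x k) y)
    (lam : Fin (N + 1) → ℝ) (h0 : ∀ k, 0 ≤ lam k) (h1 : ∑ k, lam k = 1)
    (hc : ∑ k, lam k • x k = y) :
    ∃ (mu : Fin (N + 1) → ℝ) (i : Fin (N + 1)), (∀ k, 0 ≤ mu k) ∧ (∑ k, mu k = 1) ∧
      (∑ k, mu k • x k = y) ∧ mu i = 0 := by
  by_cases hex : ∃ i, lam i = 0
  · obtain ⟨i, hi⟩ := hex
    exact ⟨lam, i, h0, h1, hc, hi⟩
  push_neg at hex
  have hpos : ∀ k, 0 < lam k := fun k => lt_of_le_of_ne (h0 k) (Ne.symm (hex k))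
  have hQ : 0 < dot y y := dot_self_pos hy
  -- all the x k lie on the hyperplane dot · y = dot y y
  have hface : ∀ k, dot (x k) y = dot y y := by
    have hsum : ∑ k, lam k * dot (x k) y = dot y y := by
      have h' := congrArg (fun z => dot z y) hc
      rw [dot_sum_left] at h'
      simp_rw [dot_smul_left] at h'
      exact h' 
    have hterm : ∀ k ∈ Finset.univ, (0:ℝ) ≤ lam k * (dot (x k) y - dot y y) :=
      fun k _ => mul_nonneg (h0 k) (by linarith [hxy k])
    have hzero : ∑ k, lam k * (dot (x k) y - dot y y) = 0 := by
      have : ∑ k, lam k * (dot (x k) y - dot y y)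
          = (∑ k, lam k * dot (x k) y) - (∑ k, lam k) * dot y y := by
        rw [Finset.sum_mul, ← Finset.sum_sub_distrib]
        exact Finset.sum_congr rfl fun k _ => by ring
      rw [this, hsum, h1, one_mul, sub_self]
    intro k
    have := (Finset.sum_eq_zero_iff_of_nonneg hterm).1 hzero k (Finset.mem_univ k)
    have := mul_eq_zero.1 this
    rcases this with h' | h'
    · exact absurd h' (hex k)
    · linarith
  -- the differences x k.succ - x 0 lie in the kernel of dotL y
  have hker_mem : ∀ a : Fin N, x a.succ - x 0 ∈ LinearMap.ker (dotL y) := by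
    intro a
    simp only [LinearMap.mem_ker, dotL, LinearMap.coe_mk, AddHom.coe_mk, dot_sub_left,
      hface a.succ, hface 0, sub_self]
  -- rank computation
  have hrange : LinearMap.range (dotL y) = ⊤ := by
    rw [LinearMap.range_eq_top]
    intro r
    refine ⟨(r / dot y y) • y, ?_⟩
    simp only [dotL, LinearMap.coe_mk, AddHom.coe_mk, dot_smul_left]
    field_simp
  have hkerrank : Module.finrank ℝ (LinearMap.ker (dotL y)) + 1 = N := by
    have h := LinearMap.finrank_range_add_finrank_ker (dotL y)
    rw [hrange] at h
    simp only [finrank_top, Module.finrank_self] at h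
    have hN : Module.finrank ℝ (Fin N → ℝ) = N := by simp
    omega
  -- linear dependence of N vectors in an (N-1)-dimensional space
  have hdep : ¬ LinearIndependent ℝ (fun a : Fin N =>
      (⟨x a.succ - x 0, hker_mem a⟩ : LinearMap.ker (dotL y))) := by
    intro hind
    have := hind.fintype_card_le_finrank
    simp only [Fintype.card_fin] at this
    omega
  rw [Fintype.not_linearIndependent_iff] at hdep
  obtain ⟨g, hgsum, a0, hga0⟩ := hdep
  have hgsum' : ∑ a, g a • (x a.succ - x 0) = 0 := by
    have := congrArg (Subtype.val) hgsum
    simpa using this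
  -- build a relation c on Fin (N+1)
  set c : Fin (N + 1) → ℝ := Fin.cases (-∑ a, g a) g with hcdef
  have hc0 : c 0 = -∑ a, g a := by simp [hcdef]
  have hcs : ∀ a : Fin N, c a.succ = g a := fun a => by simp [hcdef]
  have hcsum : ∑ k, c k = 0 := by
    rw [Fin.sum_univ_succ, hc0]
    simp [hcs]
  have hcx : ∑ k, c k • x k = 0 := by
    rw [Fin.sum_univ_succ, hc0]
    simp only [hcs]
    have hexp : ∑ a, g a • (x a.succ - x 0)
        = (-∑ a, g a) • x 0 + ∑ a, g a • x a.succ := by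
      simp_rw [smul_sub]
      rw [Finset.sum_sub_distrib, ← Finset.sum_smul, neg_smul]
      abel
    rw [← hexp]
    exact hgsum'
  have hcne : c a0.succ ≠ 0 := by rw [hcs]; exact hga0
  -- get a positive coefficient
  have hposc : ∃ k, 0 < c k := by
    by_contra hno
    push_neg at hno
    have hlt : ∑ k, c k < 0 := by
      have := Finset.sum_lt_sum (fun k (_ : k ∈ Finset.univ) => hno k)
        ⟨a0.succ, Finset.mem_univ _, lt_of_le_of_ne (hno a0.succ) hcne⟩
      simpa using this
    rw [hcsum] at hlt
    exact absurd hlt (lt_irrefl 0)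
  obtain ⟨k1, hk1⟩ := hposc
  set I : Finset (Fin (N + 1)) := Finset.univ.filter (fun k => 0 < c k) with hIdef
  have hInonempty : I.Nonempty := ⟨k1, by simp [hIdef, hk1]⟩
  obtain ⟨k0, hk0I, hk0min⟩ := Finset.exists_min_image I (fun k => lam k / c k) hInonempty
  have hck0 : 0 < c k0 := by simpa [hIdef] using hk0I
  set r : ℝ := lam k0 / c k0 with hrdef
  have hr0 : 0 < r := div_pos (hpos k0) hck0
  set mu : Fin (N + 1) → ℝ := fun k => lam k - r * c k with hmudef
  have hmu0 : ∀ k, 0 ≤ mu k := by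
    intro k
    by_cases h : 0 < c k
    · have hkI : k ∈ I := by simp [hIdef, h]
      have hmin := hk0min k hkI
      have hrc : r * c k ≤ lam k := by
        rw [hrdef, div_mul_eq_mul_div, div_le_iff₀ hck0]
        exact (div_le_div_iff₀ hck0 h).1 hmin
      simp only [hmudef]; linarith
    · push_neg at h
      have h2 : r * c k ≤ 0 := mul_nonpos_of_nonneg_of_nonpos hr0.le h
      have := h0 k
      simp only [hmudef]; linarith
  refine ⟨mu, k0, hmu0, ?_, ?_, ?_⟩
  · simp only [hmudef]
    rw [Finset.sum_sub_distrib, h1, ← Finset.mul_sum, hcsum, mul_zero, sub_zero]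
  · simp only [hmudef]
    have : ∀ k, (lam k - r * c k) • x k = lam k • x k - r • (c k • x k) := by
      intro k; rw [sub_smul, smul_smul]
    simp_rw [this]
    rw [Finset.sum_sub_distrib, hc, ← Finset.smul_sum, hcx, smul_zero, sub_zero]
  · have hck0' : c k0 ≠ 0 := hck0.ne'
    simp only [hmudef, hrdef]
    field_simp
    ring

/-- **Colorful Carathéodory theorem** (Bárány). If each of `N+1` finite "color classes" in
`ℝ^N` contains `0` in its convex hull, then there is a transversal (one point per class)
whose convex hull contains `0`, given by explicit weights. -/
theorem colorful_caratheodory (S : Fin (N + 1) → Finset (Fin N → ℝ))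
    (h : ∀ i, (0 : Fin N → ℝ) ∈ convexHull ℝ ((S i : Set (Fin N → ℝ)))) :
    ∃ (x : Fin (N + 1) → (Fin N → ℝ)) (lam : Fin (N + 1) → ℝ),
      (∀ i, x i ∈ S i) ∧ (∀ i, 0 ≤ lam i) ∧ (∑ i, lam i = 1) ∧ ∑ i, lam i • x i = 0 := by
  classical
  have hSne : ∀ i, (S i).Nonempty := by
    intro i
    rcases (convexHull_nonempty_iff (𝕜 := ℝ)).1 ⟨0, h i⟩ with ⟨p, hp⟩
    exact ⟨p, hp⟩
  haveI : ∀ i, Nonempty {p // p ∈ S i} := fun i => ⟨⟨(hSne i).choose, (hSne i).choose_spec⟩⟩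
  -- the (finitely many) transversals and the convex hulls they span
  set K : (∀ i, {p // p ∈ S i}) → Set (Fin N → ℝ) :=
    fun t => convexHull ℝ (Set.range fun i => (t i : Fin N → ℝ)) with hKdef
  have hKconv : ∀ t, Convex ℝ (K t) := fun t => convex_convexHull ℝ _
  have hKcompact : ∀ t, IsCompact (K t) := fun t =>
    (Set.finite_range _).isCompact_convexHull ℝ
  have hKne : ∀ t, (K t).Nonempty := fun t =>
    ⟨(t 0 : Fin N → ℝ), subset_convexHull ℝ _ (Set.mem_range_self 0)⟩
  have Qcont : Continuous fun z : Fin N → ℝ => dot z z :=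
    continuous_finset_sum _ fun i _ => (continuous_apply i).mul (continuous_apply i)
  -- each hull has a point of minimal norm
  have hmin : ∀ t, ∃ y ∈ K t, ∀ z ∈ K t, dot y y ≤ dot z z := by
    intro t
    obtain ⟨y, hyK, hy⟩ := (hKcompact t).exists_isMinOn (hKne t) Qcont.continuousOn
    exact ⟨y, hyK, fun z hz => hy hz⟩
  choose ymin hymem hymin using hmin
  -- choose the transversal minimizing the minimal norm
  obtain ⟨t0, ht0⟩ := Finite.exists_min fun t => dot (ymin t) (ymin t)
  set y := ymin t0 with hydef
  have master : ∀ t, ∀ z ∈ K t, dot y y ≤ dot z z := fun t z hz =>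
    le_trans (ht0 t) (hymin t z hz)
  set x : Fin (N + 1) → (Fin N → ℝ) := fun i => (t0 i : Fin N → ℝ) with hxdef
  have hxS : ∀ i, x i ∈ S i := fun i => (t0 i).2
  by_cases hy0 : y = 0
  · -- 0 is in the hull of the transversal: done
    have h0K : (0 : Fin N → ℝ) ∈ convexHull ℝ (Set.range x) := hy0 ▸ hymem t0
    obtain ⟨lam, hl0, hl1, hlc⟩ := exists_weights x h0K
    exact ⟨x, lam, hxS, hl0, hl1, hlc⟩
  exfalso
  have hQ : 0 < dot y y := dot_self_pos hy0
  -- variational inequality at the minimum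
  have varineq : ∀ z ∈ K t0, dot y y ≤ dot z y := by
    intro z hz
    by_contra hlt
    push_neg at hlt
    obtain ⟨z', hz', hz'lt⟩ := decrease (hKconv t0) (hymem t0) hz hlt
    exact absurd (master t0 z' hz') (not_le.2 hz'lt)
  have hxK : ∀ k, x k ∈ K t0 := fun k =>
    subset_convexHull ℝ _ (Set.mem_range_self k)
  obtain ⟨lam, hl0, hl1, hlc⟩ := exists_weights x (hymem t0)
  obtain ⟨mu, i, hmu0, hmu1, hmuc, hmui⟩ :=
    exists_zero_coeff y hy0 x (fun k => varineq (x k) (hxK k)) lam hl0 hl1 hlc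
  -- find a point of the i-th class on the other side of the hyperplane
  have hs0 : ∃ s0 ∈ S i, dot s0 y ≤ 0 := by
    by_contra hno
    push_neg at hno
    have h0 := h i
    rw [Finset.convexHull_eq] at h0
    obtain ⟨w, hw0, hw1, hwc⟩ := h0
    have hcm : (S i).centerMass w id = ∑ p ∈ S i, w p • p := by
      rw [Finset.centerMass_eq_of_sum_1 _ _ hw1]
      rfl
    have hzero : ∑ p ∈ S i, w p * dot p y = 0 := by
      have h' := congrArg (fun z => dot z y) hwc
      rw [hcm] at hwc
      have h'' := congrArg (fun z => dot z y) hwc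
      simp only [dot_zero_left] at h''
      rw [dot_sum_left] at h''
      simp_rw [dot_smul_left] at h''
      exact h''
    have hwp : ∃ p ∈ S i, 0 < w p := by
      by_contra hnw
      push_neg at hnw
      have : ∑ p ∈ S i, w p ≤ 0 := Finset.sum_nonpos hnw
      rw [hw1] at this
      linarith
    obtain ⟨p0, hp0, hwp0⟩ := hwp
    have hpos : 0 < ∑ p ∈ S i, w p * dot p y := by
      apply Finset.sum_pos'
      · exact fun p hp => mul_nonneg (hw0 p hp) (hno p hp).le
      · exact ⟨p0, hp0, mul_pos hwp0 (hno p0 hp0)⟩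
    rw [hzero] at hpos
    exact lt_irrefl 0 hpos
  obtain ⟨s0, hs0S, hs0y⟩ := hs0
  -- the swapped transversal
  set t1 := Function.update t0 i ⟨s0, hs0S⟩ with ht1def
  set x' : Fin (N + 1) → (Fin N → ℝ) := fun k => (t1 k : Fin N → ℝ) with hx'def
  have hx'i : x' i = s0 := by simp [hx'def, ht1def]
  have hx'ne : ∀ k, k ≠ i → x' k = x k := by
    intro k hk
    simp [hx'def, ht1def, hxdef, Function.update_of_ne hk]
  have hyK1 : y ∈ K t1 := by
    apply mem_convexHull_of_exists_fintype mu x' hmu0 hmu1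
      (fun k => Set.mem_range_self k)
    rw [← hmuc]
    apply Finset.sum_congr rfl
    intro k _
    by_cases hk : k = i
    · subst hk
      rw [hmui, zero_smul, zero_smul]
    · rw [hx'ne k hk]
  have hs0K1 : s0 ∈ K t1 := hx'i ▸ subset_convexHull ℝ _ (Set.mem_range_self i)
  obtain ⟨z, hzK1, hzlt⟩ := decrease (hKconv t1) hyK1 hs0K1 (by linarith)
  exact absurd (master t1 z hzK1) (not_le.2 hzlt)

section Sarkaria

variable {M d : ℕ}

/-- The `M+1` vectors in `ℝ^M` summing to zero, any `M` of which are independent: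
`v j = e_j` for `j < M` and `v M = -(1,…,1)`. -/
def v (M : ℕ) (j : Fin (M + 1)) (a : Fin M) : ℝ :=
  (if (j : ℕ) = (a : ℕ) then 1 else 0) - (if (j : ℕ) = M then 1 else 0)

lemma ind_sum {k : ℕ} (hk : k < M + 1) :
    ∑ j : Fin (M + 1), (if (j : ℕ) = k then (1 : ℝ) else 0) = 1 := by
  rw [Finset.sum_eq_single (⟨k, hk⟩ : Fin (M + 1))]
  · simp
  · intro b _ hb
    rw [if_neg]
    intro hbk
    exact hb (Fin.ext hbk)
  · simp

lemma ind_sum_mul (c : Fin (M + 1) → ℝ) {k : ℕ} (hk : k < M + 1) :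
    ∑ j : Fin (M + 1), c j * (if (j : ℕ) = k then (1 : ℝ) else 0) = c ⟨k, hk⟩ := by
  rw [Finset.sum_eq_single (⟨k, hk⟩ : Fin (M + 1))]
  · simp
  · intro b _ hb
    rw [if_neg, mul_zero]
    intro hbk
    exact hb (Fin.ext hbk)
  · simp

lemma vsum (a : Fin M) : ∑ j, v M j a = 0 := by
  unfold v
  rw [Finset.sum_sub_distrib, ind_sum (a.isLt.trans (Nat.lt_succ_self M)),
    ind_sum (Nat.lt_succ_self M), sub_self]

/-- Kernel property: a relation on the `v j` forces equal coefficients. -/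
lemma vker {c : Fin (M + 1) → ℝ} (hc : ∀ a : Fin M, ∑ j, c j * v M j a = 0) :
    ∀ j, c j = c ⟨M, Nat.lt_succ_self M⟩ := by
  have key : ∀ a : Fin M, c ⟨(a : ℕ), a.isLt.trans (Nat.lt_succ_self M)⟩
      = c ⟨M, Nat.lt_succ_self M⟩ := by
    intro a
    have h := hc a
    unfold v at h
    simp_rw [mul_sub] at h
    rw [Finset.sum_sub_distrib, ind_sum_mul c (a.isLt.trans (Nat.lt_succ_self M)),
      ind_sum_mul c (Nat.lt_succ_self M), sub_eq_zero] at h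
    exact h
  intro j
  rcases lt_or_eq_of_le (Nat.lt_succ_iff.1 j.isLt) with hj | hj
  · have := key ⟨(j : ℕ), hj⟩
    simpa using this
  · congr 1
    exact Fin.ext hj

/-- Append a `1` coordinate: the affine lift `ℝ^d → ℝ^{d+1}`. -/
def q (p : Fin d → ℝ) (b : Fin (d + 1)) : ℝ :=
  if h : (b : ℕ) < d then p ⟨b, h⟩ else 1

lemma q_last (p : Fin d → ℝ) : q p ⟨d, Nat.lt_succ_self d⟩ = 1 := by
  simp [q]

lemma q_coord (p : Fin d → ℝ) (a : Fin d) :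
    q p ⟨(a : ℕ), a.isLt.trans (Nat.lt_succ_self d)⟩ = p a := by
  simp only [q, a.isLt, dif_pos]

/-- The tensor product map `ℝ^M × ℝ^{d+1} → ℝ^{M(d+1)}`. -/
def L (u : Fin M → ℝ) (w : Fin (d + 1) → ℝ) : Fin (M * (d + 1)) → ℝ :=
  fun n => u (finProdFinEquiv.symm n).1 * w (finProdFinEquiv.symm n).2

lemma L_apply (u : Fin M → ℝ) (w : Fin (d + 1) → ℝ) (a : Fin M) (b : Fin (d + 1)) :
    L u w (finProdFinEquiv (a, b)) = u a * w b := by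
  simp [L]

end Sarkaria

end TverbergAux

open TverbergAux

/-- Tverberg's theorem: any set of `(m-1)(d+1)+1` points in `ℝ^d` can be partitioned
into `m` pairwise disjoint parts whose convex hulls have a common point. -/
theorem tverberg (d m : ℕ) (hm : 1 ≤ m) (P : Finset (Fin d → ℝ))
    (hcard : P.card = (m - 1) * (d + 1) + 1) :
    ∃ T : Fin m → Finset (Fin d → ℝ),
      (∀ i j, i ≠ j → Disjoint (T i) (T j)) ∧
      Finset.univ.biUnion T = P ∧
      (⋂ i, convexHull ℝ (T i : Set (Fin d → ℝ))).Nonempty := by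
  classical
  obtain ⟨M, rfl⟩ : ∃ M, m = M + 1 := ⟨m - 1, (Nat.succ_pred_eq_of_pos hm).symm⟩
  simp only [Nat.add_sub_cancel] at hcard
  set N := M * (d + 1) with hN
  -- enumerate the points
  have hcard' : P.card = N + 1 := hcard
  set pe := (Finset.equivFinOfCardEq hcard').symm with hpe
  set p : Fin (N + 1) → (Fin d → ℝ) := fun i => ((pe i : P) : Fin d → ℝ) with hpdef
  have hpinj : Function.Injective p := fun i j hij => by
    apply pe.injective
    exact Subtype.ext hij
  have hpP : ∀ i, p i ∈ P := fun i => (pe i).2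
  have himg : Finset.univ.image p = P := by
    ext y
    simp only [Finset.mem_image, Finset.mem_univ, true_and]
    constructor
    · rintro ⟨i, rfl⟩; exact hpP i
    · intro hy
      exact ⟨pe.symm ⟨y, hy⟩, by simp [hpdef]⟩
  -- the lifted color classes
  set S : Fin (N + 1) → Finset (Fin N → ℝ) :=
    fun i => Finset.univ.image (fun j : Fin (M + 1) => L (v M j) (q (p i))) with hSdef
  have h0 : ∀ i, (0 : Fin N → ℝ) ∈ convexHull ℝ ((S i : Set (Fin N → ℝ))) := by
    intro i
    apply mem_convexHull_of_exists_fintype (fun _ : Fin (M + 1) => (1 : ℝ) / (M + 1))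
      (fun j => L (v M j) (q (p i)))
    · intro j; positivity
    · rw [Finset.sum_const, Finset.card_univ, Fintype.card_fin, nsmul_eq_mul]
      field_simp
      norm_num
    · intro j
      exact Finset.mem_coe.2 (Finset.mem_image_of_mem _ (Finset.mem_univ j))
    · funext n
      simp only [Finset.sum_apply, Pi.smul_apply, smul_eq_mul, Pi.zero_apply, L]
      have heq : (∑ j, (1:ℝ)/(M+1) * (v M j (finProdFinEquiv.symm n).1 *
          q (p i) (finProdFinEquiv.symm n).2)) = ((1:ℝ)/(M+1) * q (p i) (finProdFinEquiv.symm n).2)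
          * ∑ j, v M j (finProdFinEquiv.symm n).1 := by
        rw [Finset.mul_sum]
        exact Finset.sum_congr rfl fun j _ => by ring
      rw [heq, vsum, mul_zero]
  -- colorful Carathéodory
  obtain ⟨x, lam, hxS, hl0, hl1, hlc⟩ := colorful_caratheodory S h0
  have hxmem : ∀ i, ∃ j : Fin (M + 1), L (v M j) (q (p i)) = x i := by
    intro i
    obtain ⟨j, _, hj⟩ := Finset.mem_image.1 (hxS i)
    exact ⟨j, hj⟩
  choose ji hji using hxmem
  -- the key bilinear identity
  have key : ∀ (a : Fin M) (b : Fin (d + 1)),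
      ∑ i, lam i * (v M (ji i) a * q (p i) b) = 0 := by
    intro a b
    have h' := congrFun hlc (finProdFinEquiv (a, b))
    simp only [Finset.sum_apply, Pi.smul_apply, smul_eq_mul, Pi.zero_apply] at h'
    rw [← h']
    apply Finset.sum_congr rfl
    intro i _
    rw [← hji i, TverbergAux.L_apply]
  -- the class weight vectors
  set W : Fin (M + 1) → Fin (d + 1) → ℝ :=
    fun jj b => ∑ i ∈ Finset.univ.filter (fun i => ji i = jj), lam i * q (p i) b with hWdef
  have group : ∀ (a : Fin M) (b : Fin (d + 1)), ∑ jj, W jj b * v M jj a = 0 := by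
    intro a b
    have : ∀ jj : Fin (M + 1), W jj b * v M jj a
        = ∑ i ∈ Finset.univ.filter (fun i => ji i = jj),
            lam i * (v M (ji i) a * q (p i) b) := by
      intro jj
      rw [hWdef]
      rw [Finset.sum_mul]
      apply Finset.sum_congr rfl
      intro i hi
      have hij : ji i = jj := (Finset.mem_filter.1 hi).2
      rw [hij]; ring
    simp_rw [this]
    rw [Finset.sum_fiberwise Finset.univ (fun i => ji i)
      (fun i => lam i * (v M (ji i) a * q (p i) b))]
    exact key a b
  set jM : Fin (M + 1) := ⟨M, Nat.lt_succ_self M⟩ with hjM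
  have weq : ∀ jj b, W jj b = W jM b := by
    intro jj b
    exact vker (c := fun j => W j b) (fun a => group a b) jj
  -- the last coordinate: all class weights are 1/(M+1)
  set blast : Fin (d + 1) := ⟨d, Nat.lt_succ_self d⟩ with hblast
  have hWsum : ∑ jj, W jj blast = 1 := by
    rw [hWdef]
    simp only
    rw [Finset.sum_fiberwise Finset.univ (fun i => ji i) (fun i => lam i * q (p i) blast)]
    rw [← hl1]
    apply Finset.sum_congr rfl
    intro i _
    rw [hblast, q_last, mul_one]
  have hWlast : ∀ jj, W jj blast = 1 / (M + 1) := by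
    have hall : ∑ jj, W jj blast = (M + 1 : ℝ) * W jM blast := by
      rw [show ∑ jj, W jj blast = ∑ jj : Fin (M+1), W jM blast from
        Finset.sum_congr rfl fun jj _ => weq jj blast]
      rw [Finset.sum_const, Finset.card_univ, Fintype.card_fin, nsmul_eq_mul]
      norm_num
    intro jj
    rw [weq jj blast]
    have hM1 : (M + 1 : ℝ) ≠ 0 := by positivity
    rw [hWsum] at hall
    field_simp
    linarith
  -- the parts
  set T : Fin (M + 1) → Finset (Fin d → ℝ) :=
    fun jj => (Finset.univ.filter (fun i => ji i = jj)).image p with hTdef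
  refine ⟨T, ?_, ?_, ?_⟩
  · intro a b hab
    rw [Finset.disjoint_left]
    intro y hya hyb
    simp only [hTdef, Finset.mem_image, Finset.mem_filter, Finset.mem_univ, true_and] at hya hyb
    obtain ⟨i1, hi1, rfl⟩ := hya
    obtain ⟨i2, hi2, hpi⟩ := hyb
    have := hpinj hpi
    exact hab (by rw [← hi1, ← hi2, this])
  · ext y
    simp only [Finset.mem_biUnion, Finset.mem_univ, true_and, hTdef, Finset.mem_image,
      Finset.mem_filter]
    constructor
    · rintro ⟨jj, i, _, rfl⟩
      exact hpP i
    · intro hy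
      obtain ⟨i, _, rfl⟩ := Finset.mem_image.1 (himg ▸ hy)
      exact ⟨ji i, i, rfl, rfl⟩
  -- the common point
  · set zstar : Fin d → ℝ := fun a =>
      (M + 1 : ℝ) * W jM ⟨(a : ℕ), a.isLt.trans (Nat.lt_succ_self d)⟩ with hzdef
    refine ⟨zstar, Set.mem_iInter.2 fun jj => ?_⟩
    have hsum_pos : 0 < ∑ i ∈ Finset.univ.filter (fun i => ji i = jj), lam i := by
      have : ∑ i ∈ Finset.univ.filter (fun i => ji i = jj), lam i = W jj blast := by
        rw [hWdef]
        apply Finset.sum_congr rfl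
        intro i _
        rw [hblast, q_last, mul_one]
      rw [this, hWlast jj]
      positivity
    have hmem := Finset.centerMass_mem_convexHull
      (t := Finset.univ.filter (fun i => ji i = jj)) (w := lam) (z := p)
      (fun i _ => hl0 i) hsum_pos
      (fun i hi => Finset.mem_coe.2 (Finset.mem_image_of_mem p hi))
    have hzc : (Finset.univ.filter (fun i => ji i = jj)).centerMass lam p = zstar := by
      rw [Finset.centerMass]
      have hws : ∑ i ∈ Finset.univ.filter (fun i => ji i = jj), lam i = 1 / (M + 1) := by
        rw [← hWlast jj, hWdef]
        apply Finset.sum_congr rfl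
        intro i _
        rw [hblast, q_last, mul_one]
      rw [hws]
      funext a
      simp only [Pi.smul_apply, smul_eq_mul, Finset.sum_apply, hzdef]
      have hWa : W jM ⟨(a : ℕ), a.isLt.trans (Nat.lt_succ_self d)⟩
          = ∑ i ∈ Finset.univ.filter (fun i => ji i = jj), lam i * p i a := by
        rw [← weq jj _, hWdef]
        apply Finset.sum_congr rfl
        intro i _
        rw [q_coord]
      rw [hWa, one_div, inv_inv]
    rw [← hzc]
    exact hmem
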